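/- Let f : ℝ^n → ℝ be a twice continuously differentiable convex function, g : ℝ^n → (-∞, ∞] a proper closed convex function, ν > 0, and x̄ ∈ ℝ^n. Suppose ∂_B prox_{νg} is a linear Newton approximation of prox_{νg} at z̄ := x̄ − ν∇f(x̄), i.e., ‖prox_{νg}(z̄) − prox_{νg}(z) − V(z̄ − z)‖₂ = o(‖z̄ − z‖₂) as z → z̄, uniformly over V ∈ ∂_B prox_{νg}(z). Then ∂F_ν is a linear Newton approximation of F_ν at x̄: ‖F_ν(x̄) − F_ν(y) − U(x̄ − y)‖₂ = o(‖x̄ − y‖₂) as y → x̄, uniformly over U ∈ ∂F_ν(y). -/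

import Mathlib

set_option maxHeartbeats 1000000

open Filter Topology

/-- The B-subdifferential of a map `F : ℝ^n → ℝ^n` at `x`: the set of limits of
derivatives `∇F(x^(k))` along sequences `x^(k) → x` of differentiability points of `F`. -/
def Bsubdiff {n : ℕ} (F : EuclideanSpace ℝ (Fin n) → EuclideanSpace ℝ (Fin n))
    (x : EuclideanSpace ℝ (Fin n)) :
    Set (EuclideanSpace ℝ (Fin n) →L[ℝ] EuclideanSpace ℝ (Fin n)) :=
  {V | ∃ u : ℕ → EuclideanSpace ℝ (Fin n),
      Filter.Tendsto u Filter.atTop (nhds x) ∧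
      (∀ k, DifferentiableAt ℝ F (u k)) ∧
      Filter.Tendsto (fun k => fderiv ℝ F (u k)) Filter.atTop (nhds V)}

/-- The proximal-gradient residual `F_ν(x) = x − prox_{νg}(x − ν ∇f(x))`,
where `prox` denotes the proximal map of `νg`. -/
noncomputable def Fnu {n : ℕ} (f : EuclideanSpace ℝ (Fin n) → ℝ)
    (prox : EuclideanSpace ℝ (Fin n) → EuclideanSpace ℝ (Fin n)) (ν : ℝ)
    (x : EuclideanSpace ℝ (Fin n)) : EuclideanSpace ℝ (Fin n) :=
  x - prox (x - ν • gradient f x)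

/-- The set-valued map `∂F_ν(x) = { I − V(I − ν ∇²f(x)) : V ∈ ∂_B prox_{νg}(x − ν∇f(x)) }`. -/
noncomputable def DFnu {n : ℕ} (f : EuclideanSpace ℝ (Fin n) → ℝ)
    (prox : EuclideanSpace ℝ (Fin n) → EuclideanSpace ℝ (Fin n)) (ν : ℝ)
    (x : EuclideanSpace ℝ (Fin n)) :
    Set (EuclideanSpace ℝ (Fin n) →L[ℝ] EuclideanSpace ℝ (Fin n)) :=
  {U | ∃ V ∈ Bsubdiff prox (x - ν • gradient f x),
    U = 1 - V * (1 - ν • fderiv ℝ (gradient f) x)}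

section Aux

open InnerProductSpace RealInnerProductSpace

/-- `g` is finite (real-valued) at any proximal point. -/
lemma prox_finite {n : ℕ} (g : EuclideanSpace ℝ (Fin n) → EReal) (ν : ℝ) (hν : 0 < ν)
    (hg_nebot : ∀ x, g x ≠ ⊥) (hg_proper : ∃ x, g x ≠ ⊤)
    (prox : EuclideanSpace ℝ (Fin n) → EuclideanSpace ℝ (Fin n))
    (hprox : ∀ x, IsMinOn
      (fun z => (ν : EReal) * g z + ((‖z - x‖ ^ 2 / 2 : ℝ) : EReal)) Set.univ (prox x))
    (x : EuclideanSpace ℝ (Fin n)) : ∃ r : ℝ, g (prox x) = (r : EReal) := by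
  obtain ⟨z₀, hz₀⟩ := hg_proper
  obtain ⟨s₀, hs₀⟩ : ∃ s₀ : ℝ, g z₀ = (s₀ : EReal) :=
    ⟨(g z₀).toReal, ((g z₀).coe_toReal hz₀ (hg_nebot z₀)).symm⟩
  have h := isMinOn_iff.mp (hprox x) z₀ (Set.mem_univ _)
  simp only [hs₀] at h
  have htop : g (prox x) ≠ ⊤ := by
    intro hT
    rw [hT] at h
    rw [EReal.mul_top_of_pos (by exact_mod_cast hν), EReal.top_add_coe] at h
    have : ((ν : EReal) * (s₀ : EReal) + ((‖z₀ - x‖ ^ 2 / 2 : ℝ) : EReal)) < ⊤ := by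
      norm_cast
    exact (this.not_ge h)
  exact ⟨(g (prox x)).toReal, ((g (prox x)).coe_toReal htop (hg_nebot _)).symm⟩

/-- Variational inequality at the proximal point. -/
lemma prox_var_ineq {n : ℕ} (g : EuclideanSpace ℝ (Fin n) → EReal) (ν : ℝ) (hν : 0 < ν)
    (hg_nebot : ∀ x, g x ≠ ⊥)
    (hg_conv : ∀ x y : EuclideanSpace ℝ (Fin n), ∀ a b : ℝ, 0 ≤ a → 0 ≤ b → a + b = 1 →
      g (a • x + b • y) ≤ (a : EReal) * g x + (b : EReal) * g y)
    (prox : EuclideanSpace ℝ (Fin n) → EuclideanSpace ℝ (Fin n))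
    (hprox : ∀ x, IsMinOn
      (fun z => (ν : EReal) * g z + ((‖z - x‖ ^ 2 / 2 : ℝ) : EReal)) Set.univ (prox x))
    (x q : EuclideanSpace ℝ (Fin n)) (a b : ℝ)
    (hp : g (prox x) = (a : EReal)) (hq : g q = (b : EReal)) :
    0 ≤ ν * (b - a) + ⟪prox x - x, q - prox x⟫_ℝ := by
  set p := prox x with hpdef
  set Q : ℝ := ‖q - p‖ ^ 2 with hQ
  have hQ0 : 0 ≤ Q := by positivity
  have step : ∀ t : ℝ, 0 < t → t ≤ 1 →
      0 ≤ ν * (b - a) + ⟪p - x, q - p⟫_ℝ + t * Q / 2 := by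
    intro t ht0 ht1
    set zt := (1 - t) • p + t • q with hzt
    have h1 := isMinOn_iff.mp (hprox x) zt (Set.mem_univ _)
    have h2 := hg_conv p q (1 - t) t (by linarith) (le_of_lt ht0) (by ring)
    rw [hp, hq, ← hzt] at h2
    have h2' : g zt ≤ (((1 - t) * a + t * b : ℝ) : EReal) := by
      refine le_trans h2 (le_of_eq ?_)
      norm_cast
    have hztt : g zt ≠ ⊤ := fun hT => by
      rw [hT] at h2'; exact ((EReal.coe_lt_top _).not_ge h2')
    obtain ⟨r, hr⟩ : ∃ r : ℝ, g zt = (r : EReal) :=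
      ⟨(g zt).toReal, ((g zt).coe_toReal hztt (hg_nebot zt)).symm⟩
    have hrle : r ≤ (1 - t) * a + t * b := by
      rw [hr] at h2'; exact_mod_cast h2'
    rw [hp, hr] at h1
    have h1' : ν * a + ‖p - x‖ ^ 2 / 2 ≤ ν * r + ‖zt - x‖ ^ 2 / 2 := by
      exact_mod_cast h1
    have hexp : zt - x = (p - x) + t • (q - p) := by
      rw [hzt]; module
    have hnorm : ‖zt - x‖ ^ 2 =
        ‖p - x‖ ^ 2 + 2 * (t * ⟪p - x, q - p⟫_ℝ) + t ^ 2 * Q := by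
      rw [hexp, @norm_add_sq_real, real_inner_smul_right, norm_smul]
      simp only [Real.norm_eq_abs, mul_pow, sq_abs, hQ]
    rw [hnorm] at h1'
    have hν' : ν * r ≤ ν * ((1 - t) * a + t * b) :=
      mul_le_mul_of_nonneg_left hrle (le_of_lt hν)
    nlinarith [mul_pos ht0 ht0]
  by_contra hc
  push_neg at hc
  set c : ℝ := ν * (b - a) + ⟪p - x, q - p⟫_ℝ with hcdef
  have hc0 : c < 0 := hc
  have ht := step (min 1 ((-c) / (Q + 1)))
    (lt_min one_pos (div_pos (by linarith) (by linarith))) (min_le_left _ _)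
  have hmin : min 1 ((-c) / (Q + 1)) ≤ (-c) / (Q + 1) := min_le_right _ _
  have h3 : min 1 ((-c) / (Q + 1)) * Q ≤ (-c) / (Q + 1) * Q :=
    mul_le_mul_of_nonneg_right hmin hQ0
  have h4 : (-c) / (Q + 1) * Q ≤ -c := by
    rw [div_mul_eq_mul_div, div_le_iff₀ (by linarith)]
    nlinarith
  linarith

/-- The proximal map is nonexpansive. -/
lemma prox_lipschitz {n : ℕ} (g : EuclideanSpace ℝ (Fin n) → EReal) (ν : ℝ) (hν : 0 < ν)
    (hg_nebot : ∀ x, g x ≠ ⊥) (hg_proper : ∃ x, g x ≠ ⊤)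
    (hg_conv : ∀ x y : EuclideanSpace ℝ (Fin n), ∀ a b : ℝ, 0 ≤ a → 0 ≤ b → a + b = 1 →
      g (a • x + b • y) ≤ (a : EReal) * g x + (b : EReal) * g y)
    (prox : EuclideanSpace ℝ (Fin n) → EuclideanSpace ℝ (Fin n))
    (hprox : ∀ x, IsMinOn
      (fun z => (ν : EReal) * g z + ((‖z - x‖ ^ 2 / 2 : ℝ) : EReal)) Set.univ (prox x)) :
    LipschitzWith 1 prox := by
  have hfin := prox_finite g ν hν hg_nebot hg_proper prox hprox
  have hvar := prox_var_ineq g ν hν hg_nebot hg_conv prox hprox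
  rw [lipschitzWith_iff_dist_le_mul]
  intro x x'
  obtain ⟨a, ha⟩ := hfin x
  obtain ⟨b, hb⟩ := hfin x'
  set p := prox x
  set q := prox x'
  have h1 := hvar x q a b ha hb
  have h2 := hvar x' p b a hb ha
  have hsum : 0 ≤ ⟪p - x, q - p⟫_ℝ + ⟪q - x', p - q⟫_ℝ := by linarith
  have hkey : ‖q - p‖ ^ 2 ≤ ⟪x' - x, q - p⟫_ℝ := by
    have e1 : ⟪q - x', p - q⟫_ℝ = -⟪q - x', q - p⟫_ℝ := by
      rw [← inner_neg_right]; congr 1; abel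
    have e2 : ⟪p - x, q - p⟫_ℝ - ⟪q - x', q - p⟫_ℝ
        = ⟪x' - x, q - p⟫_ℝ - ⟪q - p, q - p⟫_ℝ := by
      rw [← inner_sub_left, ← inner_sub_left]; congr 1; abel
    have e3 : ⟪q - p, q - p⟫_ℝ = ‖q - p‖ ^ 2 := real_inner_self_eq_norm_sq _
    linarith [hsum, e1 ▸ hsum]
  have hcs : ⟪x' - x, q - p⟫_ℝ ≤ ‖x' - x‖ * ‖q - p‖ := real_inner_le_norm _ _
  have hsq : ‖q - p‖ ^ 2 ≤ ‖x' - x‖ * ‖q - p‖ := le_trans hkey hcs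
  rcases eq_or_lt_of_le (norm_nonneg (q - p)) with h0 | h0
  · rw [dist_eq_norm, NNReal.coe_one, one_mul, dist_eq_norm]
    calc ‖p - q‖ = ‖q - p‖ := norm_sub_rev _ _
      _ = 0 := h0.symm
      _ ≤ ‖x - x'‖ := norm_nonneg _
  · rw [dist_eq_norm, NNReal.coe_one, one_mul, dist_eq_norm]
    have : ‖q - p‖ ≤ ‖x' - x‖ := by nlinarith
    calc ‖p - q‖ = ‖q - p‖ := norm_sub_rev _ _
      _ ≤ ‖x' - x‖ := this
      _ = ‖x - x'‖ := norm_sub_rev _ _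

/-- Elements of the B-subdifferential of a 1-Lipschitz map have operator norm at most 1. -/
lemma bsub_norm_le {n : ℕ} {F : EuclideanSpace ℝ (Fin n) → EuclideanSpace ℝ (Fin n)}
    (hF : LipschitzWith 1 F) {z : EuclideanSpace ℝ (Fin n)}
    {V : EuclideanSpace ℝ (Fin n) →L[ℝ] EuclideanSpace ℝ (Fin n)}
    (hV : V ∈ Bsubdiff F z) : ‖V‖ ≤ 1 := by
  obtain ⟨u, -, hdiff, hlim⟩ := hV
  have hb : ∀ k, ‖fderiv ℝ F (u k)‖ ≤ 1 := fun k =>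
    le_trans ((hdiff k).hasFDerivAt.le_of_lipschitz hF) (by norm_num)
  exact le_of_tendsto (hlim.norm) (Filter.Eventually.of_forall hb)

end Aux

/-- Proposition 3.2, first part. If `∂_B prox_{νg}` is a linear Newton
approximation of `prox_{νg}` at `z̄ = x̄ − ν∇f(x̄)`, then `∂F_ν` is a linear Newton
approximation of `F_ν` at `x̄`. -/
theorem statement8 {n : ℕ} (f : EuclideanSpace ℝ (Fin n) → ℝ)
    (g : EuclideanSpace ℝ (Fin n) → EReal) (ν : ℝ) (hν : 0 < ν)
    (hf : ContDiff ℝ 2 f) (hf_conv : ConvexOn ℝ Set.univ f)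
    (hg_nebot : ∀ x, g x ≠ ⊥) (hg_proper : ∃ x, g x ≠ ⊤)
    (hg_closed : LowerSemicontinuous g)
    (hg_conv : ∀ x y : EuclideanSpace ℝ (Fin n), ∀ a b : ℝ, 0 ≤ a → 0 ≤ b → a + b = 1 →
      g (a • x + b • y) ≤ (a : EReal) * g x + (b : EReal) * g y)
    (prox : EuclideanSpace ℝ (Fin n) → EuclideanSpace ℝ (Fin n))
    (hprox : ∀ x, IsMinOn
      (fun z => (ν : EReal) * g z + ((‖z - x‖ ^ 2 / 2 : ℝ) : EReal)) Set.univ (prox x))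
    (xbar : EuclideanSpace ℝ (Fin n))
    (hLNA : ∀ ε > (0 : ℝ), ∃ δ > (0 : ℝ), ∀ z : EuclideanSpace ℝ (Fin n),
      ‖z - (xbar - ν • gradient f xbar)‖ < δ → ∀ V ∈ Bsubdiff prox z,
        ‖prox (xbar - ν • gradient f xbar) - prox z - V ((xbar - ν • gradient f xbar) - z)‖
          ≤ ε * ‖(xbar - ν • gradient f xbar) - z‖) :
    ∀ ε > (0 : ℝ), ∃ δ > (0 : ℝ), ∀ y : EuclideanSpace ℝ (Fin n), ‖y - xbar‖ < δ →
      ∀ U ∈ DFnu f prox ν y,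
        ‖Fnu f prox ν xbar - Fnu f prox ν y - U (xbar - y)‖ ≤ ε * ‖xbar - y‖ := by
  intro ε hε
  -- smoothness of the gradient
  have hG1 : ContDiff ℝ 1 (gradient f) :=
    ((InnerProductSpace.toDual ℝ (EuclideanSpace ℝ (Fin n))).symm.contDiff).comp
      (hf.fderiv_right (by norm_num))
  have hGdiff : Differentiable ℝ (gradient f) := hG1.differentiable one_ne_zero
  have hHcont : Continuous (fderiv ℝ (gradient f)) := hG1.continuous_fderiv one_ne_zero
  -- parameters
  set M : ℝ := ‖fderiv ℝ (gradient f) xbar‖ + 1 with hM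
  have hM1 : 1 ≤ M := by
    rw [hM]; linarith [norm_nonneg (fderiv ℝ (gradient f) xbar)]
  have hM0 : 0 < M := by linarith
  set ε₂ : ℝ := ε / (2 * ν) with hε₂def
  have hε₂ : 0 < ε₂ := by positivity
  set η : ℝ := min 1 (ε₂ / 2) with hηdef
  have hη : 0 < η := lt_min one_pos (by positivity)
  obtain ⟨r, hr0, hr⟩ := Metric.continuousAt_iff.mp hHcont.continuousAt η hη
  have hball_bound : ∀ t ∈ Metric.ball xbar r, ‖fderiv ℝ (gradient f) t‖ ≤ M := by
    intro t ht
    have h1 : dist (fderiv ℝ (gradient f) t) (fderiv ℝ (gradient f) xbar) < η :=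
      hr (Metric.mem_ball.mp ht)
    rw [dist_eq_norm] at h1
    have h5 := norm_sub_norm_le (fderiv ℝ (gradient f) t) (fderiv ℝ (gradient f) xbar)
    have h6 : η ≤ 1 := min_le_left _ _
    rw [hM]; linarith
  set K : ℝ := 1 + ν * M with hK
  have hK0 : 0 < K := by positivity
  set ε₁ : ℝ := ε / (2 * K) with hε₁def
  have hε₁ : 0 < ε₁ := by positivity
  obtain ⟨δ₁, hδ₁, hLNA'⟩ := hLNA ε₁ hε₁
  refine ⟨min r (δ₁ / K), lt_min hr0 (by positivity), ?_⟩
  intro y hy U hU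
  obtain ⟨V, hV, hUeq⟩ := hU
  have hyr : ‖y - xbar‖ < r := lt_of_lt_of_le hy (min_le_left _ _)
  have hyδ : ‖y - xbar‖ < δ₁ / K := lt_of_lt_of_le hy (min_le_right _ _)
  have hy_ball : y ∈ Metric.ball xbar r := by
    rw [Metric.mem_ball, dist_eq_norm]; exact hyr
  have hx_ball : xbar ∈ Metric.ball xbar r := Metric.mem_ball_self hr0
  -- Lipschitz bound on the gradient over the ball
  have hGlip : ‖gradient f xbar - gradient f y‖ ≤ M * ‖xbar - y‖ :=
    (convex_ball xbar r).norm_image_sub_le_of_norm_fderiv_le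
      (fun t _ => hGdiff t) hball_bound hy_ball hx_ball
  -- bound on the step points
  have hzbound : ‖(y - ν • gradient f y) - (xbar - ν • gradient f xbar)‖ ≤ K * ‖xbar - y‖ := by
    have e : (y - ν • gradient f y) - (xbar - ν • gradient f xbar)
        = (y - xbar) + ν • (gradient f xbar - gradient f y) := by module
    rw [e]
    calc ‖(y - xbar) + ν • (gradient f xbar - gradient f y)‖
        ≤ ‖y - xbar‖ + ‖ν • (gradient f xbar - gradient f y)‖ := norm_add_le _ _
      _ ≤ ‖xbar - y‖ + ν * (M * ‖xbar - y‖) := by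
          rw [norm_smul, Real.norm_eq_abs, abs_of_pos hν]
          have := mul_le_mul_of_nonneg_left hGlip (le_of_lt hν)
          rw [norm_sub_rev y xbar]
          linarith
      _ = K * ‖xbar - y‖ := by rw [hK]; ring
  have hzlt : ‖(y - ν • gradient f y) - (xbar - ν • gradient f xbar)‖ < δ₁ := by
    have h1 : K * ‖xbar - y‖ < δ₁ := by
      have h2 : K * ‖xbar - y‖ < K * (δ₁ / K) := by
        apply mul_lt_mul_of_pos_left _ hK0
        rw [norm_sub_rev]; exact hyδ
      rwa [mul_div_cancel₀ _ (ne_of_gt hK0)] at h2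
    exact lt_of_le_of_lt hzbound h1
  -- the LNA estimate
  have hA := hLNA' (y - ν • gradient f y) hzlt V hV
  -- Taylor estimate for the gradient
  have hB : ‖gradient f xbar - gradient f y - (fderiv ℝ (gradient f) y) (xbar - y)‖
      ≤ ε₂ * ‖xbar - y‖ := by
    apply (convex_ball xbar r).norm_image_sub_le_of_norm_fderiv_le'
      (fun t _ => hGdiff t) _ hy_ball hx_ball
    intro t ht
    have h1 : dist (fderiv ℝ (gradient f) t) (fderiv ℝ (gradient f) xbar) < η :=
      hr (Metric.mem_ball.mp ht)
    have h2 : dist (fderiv ℝ (gradient f) y) (fderiv ℝ (gradient f) xbar) < η :=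
      hr (Metric.mem_ball.mp hy_ball)
    have h3 : dist (fderiv ℝ (gradient f) t) (fderiv ℝ (gradient f) y) < 2 * η := by
      calc dist (fderiv ℝ (gradient f) t) (fderiv ℝ (gradient f) y)
          ≤ dist (fderiv ℝ (gradient f) t) (fderiv ℝ (gradient f) xbar)
            + dist (fderiv ℝ (gradient f) xbar) (fderiv ℝ (gradient f) y) := dist_triangle _ _ _
        _ < 2 * η := by rw [dist_comm (fderiv ℝ (gradient f) xbar)]; linarith
    rw [dist_eq_norm] at h3
    have h4 : 2 * η ≤ ε₂ := by
      have := min_le_right (1:ℝ) (ε₂ / 2)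
      rw [← hηdef] at this
      linarith
    exact le_of_lt (lt_of_lt_of_le h3 h4)
  -- norm of V
  have hlip := prox_lipschitz g ν hν hg_nebot hg_proper hg_conv prox hprox
  have hVnorm : ‖V‖ ≤ 1 := bsub_norm_le hlip hV
  -- algebraic identity
  have hUapp : U (xbar - y) = (xbar - y)
      - V ((xbar - y) - ν • (fderiv ℝ (gradient f) y) (xbar - y)) := by
    rw [hUeq]
    simp [ContinuousLinearMap.sub_apply, ContinuousLinearMap.mul_apply,
      ContinuousLinearMap.smul_apply, ContinuousLinearMap.one_apply]
  have hargeq : (xbar - y) - ν • (fderiv ℝ (gradient f) y) (xbar - y)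
      = ((xbar - ν • gradient f xbar) - (y - ν • gradient f y))
        + ν • (gradient f xbar - gradient f y - (fderiv ℝ (gradient f) y) (xbar - y)) := by
    module
  have hVapp : V ((xbar - y) - ν • (fderiv ℝ (gradient f) y) (xbar - y))
      = V ((xbar - ν • gradient f xbar) - (y - ν • gradient f y))
        + ν • V (gradient f xbar - gradient f y - (fderiv ℝ (gradient f) y) (xbar - y)) := by
    rw [hargeq, map_add, map_smul]
  have hmain : Fnu f prox ν xbar - Fnu f prox ν y - U (xbar - y)
      = -(prox (xbar - ν • gradient f xbar) - prox (y - ν • gradient f y)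
            - V ((xbar - ν • gradient f xbar) - (y - ν • gradient f y)))
        + ν • V (gradient f xbar - gradient f y - (fderiv ℝ (gradient f) y) (xbar - y)) := by
    simp only [Fnu]
    rw [hUapp, hVapp]
    abel
  rw [hmain]
  have hVB : ‖V (gradient f xbar - gradient f y - (fderiv ℝ (gradient f) y) (xbar - y))‖
      ≤ ε₂ * ‖xbar - y‖ := by
    calc ‖V (gradient f xbar - gradient f y - (fderiv ℝ (gradient f) y) (xbar - y))‖
        ≤ ‖V‖ * ‖gradient f xbar - gradient f y - (fderiv ℝ (gradient f) y) (xbar - y)‖ :=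
          V.le_opNorm _
      _ ≤ 1 * (ε₂ * ‖xbar - y‖) :=
          mul_le_mul hVnorm hB (norm_nonneg _) zero_le_one
      _ = ε₂ * ‖xbar - y‖ := one_mul _
  have hAbound : ‖prox (xbar - ν • gradient f xbar) - prox (y - ν • gradient f y)
      - V ((xbar - ν • gradient f xbar) - (y - ν • gradient f y))‖ ≤ ε₁ * (K * ‖xbar - y‖) := by
    refine le_trans hA ?_
    apply mul_le_mul_of_nonneg_left _ (le_of_lt hε₁)
    rw [norm_sub_rev]
    exact hzbound
  calc ‖-(prox (xbar - ν • gradient f xbar) - prox (y - ν • gradient f y)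
            - V ((xbar - ν • gradient f xbar) - (y - ν • gradient f y)))
        + ν • V (gradient f xbar - gradient f y - (fderiv ℝ (gradient f) y) (xbar - y))‖
      ≤ ‖prox (xbar - ν • gradient f xbar) - prox (y - ν • gradient f y)
            - V ((xbar - ν • gradient f xbar) - (y - ν • gradient f y))‖
        + ν * ‖V (gradient f xbar - gradient f y - (fderiv ℝ (gradient f) y) (xbar - y))‖ := by
        refine le_trans (norm_add_le _ _) ?_
        rw [norm_neg, norm_smul, Real.norm_eq_abs, abs_of_pos hν]
    _ ≤ ε₁ * (K * ‖xbar - y‖) + ν * (ε₂ * ‖xbar - y‖) := by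
        refine add_le_add hAbound (mul_le_mul_of_nonneg_left hVB (le_of_lt hν))
    _ = ε * ‖xbar - y‖ := by
        rw [hε₁def, hε₂def]
        field_simp
        ring
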